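/- Let B be an infinite complete ccc Boolean algebra of cardinality at most the continuum 𝔠. Then the following are equivalent: (i) every filter on B having a base of cardinality less than 𝔠 can be extended to a coherent P-ultrafilter on B; (ii) there is no dominating family of functions ℕ → ℕ of cardinality less than 𝔠 (equivalently, 𝔠 = 𝔡). -/

import Mathlib

open Cardinal Filter

variable {B : Type*}

/-- A partition of a Boolean algebra: a set of nonzero, pairwise disjoint
elements that is maximal (every nonzero element meets some member). -/
def IsBPartition [BooleanAlgebra B] (P : Set B) : Prop :=
  ⊥ ∉ P ∧ (P.Pairwise fun a b => a ⊓ b = ⊥) ∧ ∀ b : B, b ≠ ⊥ → ∃ p ∈ P, b ⊓ p ≠ ⊥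

/-- `P` refines `Q`: every member of `P` lies below some member of `Q`. -/
def BRefines [BooleanAlgebra B] (P Q : Set B) : Prop :=
  ∀ p ∈ P, ∃ q ∈ Q, p ≤ q

/-- A filter on a Boolean algebra. -/
def IsBFilter [BooleanAlgebra B] (F : Set B) : Prop :=
  ⊥ ∉ F ∧ ⊤ ∈ F ∧ (∀ a ∈ F, ∀ b : B, a ≤ b → b ∈ F) ∧ ∀ a ∈ F, ∀ b ∈ F, a ⊓ b ∈ F

/-- An ultrafilter on a Boolean algebra. -/
def IsBUltrafilter [BooleanAlgebra B] (U : Set B) : Prop :=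
  IsBFilter U ∧ ∀ b : B, b ∈ U ∨ bᶜ ∈ U

/-- The countable chain condition: every set of pairwise disjoint
nonzero elements is countable. -/
def BCCC (B : Type*) [BooleanAlgebra B] : Prop :=
  ∀ S : Set B, ⊥ ∉ S → (S.Pairwise fun a b => a ⊓ b = ⊥) → S.Countable

/-- A filter on ℕ, presented as a family of subsets of ℕ. -/
def IsNFilter (V : Set (Set ℕ)) : Prop :=
  ∅ ∉ V ∧ Set.univ ∈ V ∧ (∀ A ∈ V, ∀ C : Set ℕ, A ⊆ C → C ∈ V) ∧
    ∀ A ∈ V, ∀ C ∈ V, A ∩ C ∈ V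

/-- An ultrafilter on ℕ, presented as a family of subsets of ℕ. -/
def IsNUltrafilter (V : Set (Set ℕ)) : Prop :=
  IsNFilter V ∧ ∀ A : Set ℕ, A ∈ V ∨ Aᶜ ∈ V

/-- A P-point on ℕ: an ultrafilter such that for every partition of ℕ into
sets not in the ultrafilter there is a member meeting each piece finitely. -/
def IsPPointFamily (V : Set (Set ℕ)) : Prop :=
  IsNUltrafilter V ∧ ∀ A : ℕ → Set ℕ, (Pairwise fun m n => A m ∩ A n = ∅) →
    (⋃ n, A n) = Set.univ → (∀ n, A n ∉ V) → ∃ S ∈ V, ∀ n, (S ∩ A n).Finite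

/-- A selective ultrafilter on ℕ: for every partition of ℕ into sets not in
the ultrafilter there is a member meeting each piece in at most one point. -/
def IsSelectiveFamily (V : Set (Set ℕ)) : Prop :=
  IsNUltrafilter V ∧ ∀ A : ℕ → Set ℕ, (Pairwise fun m n => A m ∩ A n = ∅) →
    (⋃ n, A n) = Set.univ → (∀ n, A n ∉ V) → ∃ S ∈ V, ∀ n, (S ∩ A n).Subsingleton

/-- A coherent P-ultrafilter: an ultrafilter whose trace on every countably
infinite partition is a P-point on ℕ. -/
def IsCoherentPUltrafilter [CompleteBooleanAlgebra B] (U : Set B) : Prop :=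
  IsBUltrafilter U ∧ ∀ p : ℕ → B, Function.Injective p → IsBPartition (Set.range p) →
    IsPPointFamily {A : Set ℕ | (⨆ n ∈ A, p n) ∈ U}

/-- A coherent selective ultrafilter: an ultrafilter whose trace on every
countably infinite partition is a selective ultrafilter on ℕ. -/
def IsCoherentSelectiveUltrafilter [CompleteBooleanAlgebra B] (U : Set B) : Prop :=
  IsBUltrafilter U ∧ ∀ p : ℕ → B, Function.Injective p → IsBPartition (Set.range p) →
    IsSelectiveFamily {A : Set ℕ | (⨆ n ∈ A, p n) ∈ U}

/-- Atomless: every nonzero element properly contains a nonzero element. -/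
def BAtomless (B : Type*) [BooleanAlgebra B] : Prop :=
  ∀ b : B, b ≠ ⊥ → ∃ c : B, c ≠ ⊥ ∧ c < b

section Meets
variable [BooleanAlgebra B]

/-- The set of finite meets of elements of `S` (including the empty meet `⊤`). -/
def meetsB (S : Set B) : Set B :=
  Set.range fun l : List S => (l.map Subtype.val).foldr (· ⊓ ·) ⊤

theorem top_mem_meetsB (S : Set B) : ⊤ ∈ meetsB S := ⟨[], rfl⟩

theorem subset_meetsB (S : Set B) : S ⊆ meetsB S := by
  intro x hx
  refine ⟨[⟨x, hx⟩], ?_⟩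
  simp

theorem foldr_inf_init (l : List B) (b : B) :
    l.foldr (· ⊓ ·) b = l.foldr (· ⊓ ·) ⊤ ⊓ b := by
  induction l with
  | nil => simp
  | cons a l ih => simp only [List.foldr_cons, ih, inf_assoc]

theorem foldr_inf_append (l₁ l₂ : List B) :
    (l₁ ++ l₂).foldr (· ⊓ ·) (⊤ : B) = l₁.foldr (· ⊓ ·) ⊤ ⊓ l₂.foldr (· ⊓ ·) ⊤ := by
  rw [List.foldr_append, foldr_inf_init]

theorem inf_mem_meetsB {S : Set B} {a b : B} (ha : a ∈ meetsB S) (hb : b ∈ meetsB S) :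
    a ⊓ b ∈ meetsB S := by
  obtain ⟨l₁, rfl⟩ := ha
  obtain ⟨l₂, rfl⟩ := hb
  exact ⟨l₁ ++ l₂, by dsimp only; rw [List.map_append, foldr_inf_append]⟩

theorem meetsB_mono {S T : Set B} (h : S ⊆ T) : meetsB S ⊆ meetsB T := by
  rintro x ⟨l, rfl⟩
  exact ⟨l.map fun s => ⟨s.1, h s.2⟩, by simp [List.map_map, Function.comp_def]⟩

theorem meetsB_subset_filter {S F : Set B} (hF : IsBFilter F) (hSF : S ⊆ F) :
    meetsB S ⊆ F := by
  rintro x ⟨l, rfl⟩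
  induction l with
  | nil => exact hF.2.1
  | cons a l ih => exact hF.2.2.2 _ (hSF a.2) _ ih

theorem mk_meetsB_le (S : Set B) : #(meetsB S) ≤ max ℵ₀ #S :=
  (mk_range_le).trans (mk_list_le_max _)

/-- decomposition of finite meets over `S ∪ {x}`. -/
theorem meetsB_union_singleton {S : Set B} {x y : B} (hy : y ∈ meetsB (S ∪ {x})) :
    ∃ c ∈ meetsB S, y = c ∨ y = c ⊓ x := by
  obtain ⟨l, rfl⟩ := hy
  induction l with
  | nil => exact ⟨⊤, top_mem_meetsB S, Or.inl rfl⟩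
  | cons a l ih =>
    obtain ⟨c, hc, hcase⟩ := ih
    rcases a.2 with hS | hx
    · refine ⟨a.1 ⊓ c, inf_mem_meetsB (subset_meetsB S hS) hc, ?_⟩
      rcases hcase with h | h
      · exact Or.inl (by simp only [List.map_cons, List.foldr_cons, h])
      · exact Or.inr (by simp only [List.map_cons, List.foldr_cons, h, inf_assoc])
    · refine ⟨c, hc, Or.inr ?_⟩
      simp only [Set.mem_singleton_iff] at hx
      rcases hcase with h | h
      · simp only [List.map_cons, List.foldr_cons, h, hx]
        exact inf_comm ..
      · simp only [List.map_cons, List.foldr_cons, h, hx]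
        rw [inf_comm x (c ⊓ x), inf_assoc, inf_idem]

/-- The filter generated by a set. -/
def genFilterB (S : Set B) : Set B := {x | ∃ c ∈ meetsB S, c ≤ x}

theorem subset_genFilterB (S : Set B) : S ⊆ genFilterB S :=
  fun x hx => ⟨x, subset_meetsB S hx, le_rfl⟩

theorem isBFilter_genFilterB {S : Set B} (h : ⊥ ∉ meetsB S) : IsBFilter (genFilterB S) := by
  refine ⟨?_, ⟨⊤, top_mem_meetsB S, le_rfl⟩, ?_, ?_⟩
  · rintro ⟨c, hc, hle⟩
    exact h (le_bot_iff.1 hle ▸ hc)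
  · rintro a ⟨c, hc, hle⟩ b hab
    exact ⟨c, hc, hle.trans hab⟩
  · rintro a ⟨c, hc, hle⟩ b ⟨d, hd, hle'⟩
    exact ⟨c ⊓ d, inf_mem_meetsB hc hd, inf_le_inf hle hle'⟩

theorem genFilterB_subset {S F : Set B} (hF : IsBFilter F) (hSF : S ⊆ F) :
    genFilterB S ⊆ F := by
  rintro x ⟨c, hc, hle⟩
  exact hF.2.2.1 _ (meetsB_subset_filter hF hSF hc) _ hle

/-- every filter extends to an ultrafilter. -/
theorem exists_isBUltrafilter_superset {F : Set B} (hF : IsBFilter F) :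
    ∃ U : Set B, IsBUltrafilter U ∧ F ⊆ U := by
  obtain ⟨M, hM⟩ := zorn_subset_nonempty {G : Set B | IsBFilter G ∧ F ⊆ G}
    (fun c hc hchain hcne => by
      refine ⟨⋃₀ c, ⟨⟨?_, ?_, ?_, ?_⟩, ?_⟩, fun s hs => Set.subset_sUnion_of_mem hs⟩
      · rintro ⟨G, hG, hbot⟩
        exact (hc hG).1.1 hbot
      · obtain ⟨G, hG⟩ := hcne
        exact ⟨G, hG, (hc hG).1.2.1⟩
      · rintro a ⟨G, hG, ha⟩ b hab
        exact ⟨G, hG, (hc hG).1.2.2.1 _ ha _ hab⟩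
      · rintro a ⟨G, hG, ha⟩ b ⟨G', hG', hb⟩
        rcases hchain.total hG hG' with h | h
        · exact ⟨G', hG', (hc hG').1.2.2.2 _ (h ha) _ hb⟩
        · exact ⟨G, hG, (hc hG).1.2.2.2 _ ha _ (h hb)⟩
      · obtain ⟨G, hG⟩ := hcne
        exact (hc hG).2.trans (Set.subset_sUnion_of_mem hG)) F ⟨hF, Set.Subset.rfl⟩
  obtain ⟨hFsub, hMmem, hmax⟩ := hM
  obtain ⟨hMf, hFM⟩ := hMmem
  refine ⟨M, ⟨hMf, fun b => ?_⟩, hFM⟩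
  by_contra hb
  push_neg at hb
  obtain ⟨hb1, hb2⟩ := hb
  have hcompat : ∀ c ∈ M, c ⊓ b ≠ ⊥ := by
    intro c hc hbot
    exact hb2 (hMf.2.2.1 c hc bᶜ (le_compl_iff_disjoint_right.mpr (disjoint_iff.mpr hbot)))
  set M' : Set B := {y | ∃ c ∈ M, c ⊓ b ≤ y} with hM'
  have hMM' : M ⊆ M' := fun a ha => ⟨a, ha, inf_le_left⟩
  have hM'f : IsBFilter M' := by
    refine ⟨?_, ⟨⊤, hMf.2.1, inf_le_right.trans le_top⟩, ?_, ?_⟩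
    · rintro ⟨c, hc, hle⟩
      exact hcompat c hc (le_bot_iff.1 hle)
    · rintro a ⟨c, hc, hle⟩ y hay
      exact ⟨c, hc, hle.trans hay⟩
    · rintro a ⟨c, hc, hle⟩ a' ⟨c', hc', hle'⟩
      exact ⟨c ⊓ c', hMf.2.2.2 _ hc _ hc', by
        calc c ⊓ c' ⊓ b ≤ (c ⊓ b) ⊓ (c' ⊓ b) :=
              le_inf (inf_le_inf_right b inf_le_left) (inf_le_inf_right b inf_le_right)
          _ ≤ a ⊓ a' := inf_le_inf hle hle'⟩
  have hsub : M' ⊆ M := hmax ⟨hM'f, hFM.trans hMM'⟩ hMM'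
  exact hb1 (hsub ⟨⊤, hMf.2.1, by simp⟩)

end Meets

section Partition
variable [CompleteBooleanAlgebra B] {p : ℕ → B}

theorem part_disj (hp : Function.Injective p) (hP : IsBPartition (Set.range p))
    {m n : ℕ} (h : m ≠ n) : p m ⊓ p n = ⊥ :=
  hP.2.1 (Set.mem_range_self m) (Set.mem_range_self n) (fun he => h (hp he))

theorem part_ne_bot (hP : IsBPartition (Set.range p)) (n : ℕ) : p n ≠ ⊥ :=
  fun h => hP.1 (h ▸ Set.mem_range_self n)

theorem part_iSup_top (hP : IsBPartition (Set.range p)) : (⨆ n, p n) = ⊤ := by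
  by_contra h
  have hc : (⨆ n, p n)ᶜ ≠ ⊥ := by
    simpa [compl_eq_bot] using h
  obtain ⟨q, ⟨n, rfl⟩, hq⟩ := hP.2.2 _ hc
  exact hq (le_bot_iff.1 (le_trans (inf_le_inf_left _ (le_iSup p n))
    (by simp [inf_comm])))

theorem bsup_inter (hp : Function.Injective p) (hP : IsBPartition (Set.range p))
    (A C : Set ℕ) : (⨆ n ∈ A, p n) ⊓ (⨆ n ∈ C, p n) = ⨆ n ∈ A ∩ C, p n := by
  refine le_antisymm ?_ (iSup₂_le fun n hn =>
    le_inf (le_iSup₂ (f := fun n _ => p n) n hn.1) (le_iSup₂ (f := fun n _ => p n) n hn.2))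
  rw [iSup_inf_eq]
  refine iSup_le fun m => ?_
  rw [iSup_inf_eq]
  refine iSup_le fun hm => ?_
  rw [inf_iSup_eq]
  refine iSup_le fun n => ?_
  rw [inf_iSup_eq]
  refine iSup_le fun hn => ?_
  rcases eq_or_ne m n with rfl | hne
  · exact le_trans inf_le_left (le_iSup₂ (f := fun n _ => p n) m ⟨hm, hn⟩)
  · simp [part_disj hp hP hne]

theorem bsup_union (A C : Set ℕ) :
    (⨆ n ∈ A ∪ C, p n) = (⨆ n ∈ A, p n) ⊔ (⨆ n ∈ C, p n) := by
  exact iSup_union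

theorem bsup_compl (hp : Function.Injective p) (hP : IsBPartition (Set.range p))
    (A : Set ℕ) : (⨆ n ∈ A, p n)ᶜ = ⨆ n ∈ Aᶜ, p n := by
  have hdis : (⨆ n ∈ A, p n) ⊓ (⨆ n ∈ Aᶜ, p n) = ⊥ := by
    rw [bsup_inter hp hP]
    simp
  have hcov : (⨆ n ∈ A, p n) ⊔ (⨆ n ∈ Aᶜ, p n) = ⊤ := by
    rw [← bsup_union, Set.union_compl_self]
    simpa using part_iSup_top hP
  have : IsCompl (⨆ n ∈ A, p n) (⨆ n ∈ Aᶜ, p n) :=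
    isCompl_iff.2 ⟨disjoint_iff.2 hdis, codisjoint_iff.2 hcov⟩
  exact this.compl_eq

/-- the trace of an ultrafilter on a countable partition is an ultrafilter on ℕ. -/
theorem trace_isNUltrafilter {U : Set B} (hU : IsBUltrafilter U)
    (hp : Function.Injective p) (hP : IsBPartition (Set.range p)) :
    IsNUltrafilter {A : Set ℕ | (⨆ n ∈ A, p n) ∈ U} := by
  obtain ⟨⟨hbot, htop, hup, hinf⟩, hult⟩ := hU
  refine ⟨⟨?_, ?_, ?_, ?_⟩, ?_⟩
  · simpa using hbot
  · have h2 : (⨆ n ∈ (Set.univ : Set ℕ), p n) = ⊤ := by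
      rw [← part_iSup_top hP]; simp
    show (⨆ n ∈ (Set.univ : Set ℕ), p n) ∈ U
    rw [h2]; exact htop
  · intro A hA C hAC
    exact hup _ hA _ (iSup₂_le fun n hn => le_iSup₂ (f := fun n _ => p n) n (hAC hn))
  · intro A hA C hC
    have := hinf _ hA _ hC
    rwa [bsup_inter hp hP] at this
  · intro A
    rcases hult (⨆ n ∈ A, p n) with h | h
    · exact Or.inl h
    · right
      rwa [bsup_compl hp hP] at h

end Partition

section Comb

theorem comb_lemma
    (hnd : ¬∃ D : Set (ℕ → ℕ), #D < Cardinal.continuum ∧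
        ∀ g : ℕ → ℕ, ∃ f ∈ D, ∀ᶠ n in Filter.atTop, g n ≤ f n)
    (𝒯 : Set (Set ℕ)) (hcard : #𝒯 < Cardinal.continuum)
    (hdir : ∀ t ∈ 𝒯, ∀ s ∈ 𝒯, ∃ r ∈ 𝒯, r ⊆ t ∩ s)
    (hne : ∀ t ∈ 𝒯, t.Nonempty)
    (A : ℕ → Set ℕ) (hdisj : Pairwise fun m n => A m ∩ A n = ∅)
    (hcov : (⋃ n, A n) = Set.univ)
    (hA : ∀ n, ∃ t ∈ 𝒯, t ∩ A n = ∅) :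
    ∃ S : Set ℕ, (∀ n, (S ∩ A n).Finite) ∧ ∀ t ∈ 𝒯, (S ∩ t).Nonempty := by
  classical
  have hex : ∀ k : ℕ, ∃ n, k ∈ A n := fun k =>
    Set.mem_iUnion.1 (hcov ▸ Set.mem_univ k)
  set h : ℕ → ℕ := fun k => Nat.find (hex k) with hh
  have hmemh : ∀ k, k ∈ A (h k) := fun k => Nat.find_spec (hex k)
  have huniq : ∀ k n, k ∈ A n → h k = n := by
    intro k n hkn
    by_contra hne'
    have : k ∈ A (h k) ∩ A n := ⟨hmemh k, hkn⟩
    rw [hdisj hne'] at this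
    exact this
  -- for every m some member of 𝒯 lies entirely above level m
  have step1 : ∀ m, ∃ t ∈ 𝒯, ∀ k ∈ t, m < h k := by
    intro m
    induction m with
    | zero =>
      obtain ⟨t, ht, htA⟩ := hA 0
      refine ⟨t, ht, fun k hk => Nat.pos_of_ne_zero fun h0 => ?_⟩
      have : k ∈ t ∩ A 0 := ⟨hk, h0 ▸ hmemh k⟩
      rw [htA] at this
      exact this
    | succ m ih =>
      obtain ⟨t, ht, htm⟩ := ih
      obtain ⟨t', ht', ht'A⟩ := hA (m + 1)
      obtain ⟨r, hr, hrsub⟩ := hdir t ht t' ht'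
      refine ⟨r, hr, fun k hk => ?_⟩
      have h1 : m < h k := htm k (hrsub hk).1
      rcases Nat.lt_or_ge (m + 1) (h k) with h2 | h2
      · exact h2
      · have heq : h k = m + 1 := by omega
        have : k ∈ t' ∩ A (m + 1) := ⟨(hrsub hk).2, heq ▸ hmemh k⟩
        rw [ht'A] at this
        exact this.elim
  -- every member of 𝒯 has points above every level
  have step2 : ∀ t : ↥𝒯, ∀ m, ∃ k, k ∈ t.1 ∧ m < h k := by
    rintro ⟨t, ht⟩ m
    obtain ⟨t', ht', ht'm⟩ := step1 m
    obtain ⟨r, hr, hrsub⟩ := hdir t ht t' ht'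
    obtain ⟨k, hk⟩ := hne r hr
    exact ⟨k, (hrsub hk).1, ht'm k (hrsub hk).2⟩
  set f : ↥𝒯 → ℕ → ℕ := fun t m => Nat.find (step2 t m) with hf
  have hfspec : ∀ t m, f t m ∈ t.1 ∧ m < h (f t m) := fun t m => Nat.find_spec (step2 t m)
  have hDcard : #(Set.range f) < Cardinal.continuum :=
    lt_of_le_of_lt Cardinal.mk_range_le hcard
  obtain ⟨g, hg⟩ : ∃ g : ℕ → ℕ, ∀ fd ∈ Set.range f, ¬∀ᶠ n in Filter.atTop, g n ≤ fd n := by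
    by_contra hcon
    push_neg at hcon
    exact hnd ⟨Set.range f, hDcard, hcon⟩
  set G : ℕ → ℕ := fun m => (Finset.range (m + 1)).sup g with hG
  have hgG : ∀ m, g m ≤ G m := fun m => Finset.le_sup (Finset.mem_range.2 (Nat.lt_succ_self m))
  have hGmono : Monotone G := fun a b hab =>
    Finset.sup_mono (Finset.range_subset_range.2 (by omega))
  refine ⟨{k | ∃ m, m < h k ∧ k ≤ G m}, fun n => ?_, fun t ht => ?_⟩
  · refine Set.Finite.subset (Set.finite_Iic (G n)) ?_
    rintro k ⟨⟨m, hmh, hkG⟩, hkA⟩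
    have : h k = n := huniq k n hkA
    exact Set.mem_Iic.2 (hkG.trans (hGmono (by omega)))
  · obtain ⟨m, hm⟩ := (Filter.not_eventually.1 (hg (f ⟨t, ht⟩) (Set.mem_range_self _))).exists
    push_neg at hm
    obtain ⟨hmem, hlt⟩ := hfspec ⟨t, ht⟩ m
    exact ⟨f ⟨t, ht⟩ m, ⟨m, hlt, le_of_lt (lt_of_lt_of_le hm (hgG m))⟩, hmem⟩

end Comb

section Step
variable [CompleteBooleanAlgebra B]

theorem ex_S
    (hnd : ¬∃ D : Set (ℕ → ℕ), #D < Cardinal.continuum ∧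
        ∀ g : ℕ → ℕ, ∃ f ∈ D, ∀ᶠ n in Filter.atTop, g n ≤ f n)
    {p : ℕ → B} (hP : IsBPartition (Set.range p))
    {A : ℕ → Set ℕ} (hdisj : Pairwise fun m n => A m ∩ A n = ∅)
    (hcov : (⋃ n, A n) = Set.univ)
    {M : Set B} (hMcard : #M < Cardinal.continuum)
    (hMinf : ∀ a ∈ M, ∀ b ∈ M, a ⊓ b ∈ M) (hMbot : ⊥ ∉ M)
    (havoid : ∀ n, ∃ c ∈ M, c ⊓ (⨆ k ∈ A n, p k) = ⊥) :
    ∃ S : Set ℕ, (∀ n, (S ∩ A n).Finite) ∧ ∀ c ∈ M, c ⊓ (⨆ k ∈ S, p k) ≠ ⊥ := by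
  set T : B → Set ℕ := fun c => {k | c ⊓ p k ≠ ⊥} with hT
  have himg : #(T '' M) < Cardinal.continuum := by
    apply Cardinal.lift_lt.1
    rw [Cardinal.lift_continuum]
    calc Cardinal.lift #(T '' M) ≤ Cardinal.lift #M := Cardinal.mk_image_le_lift
      _ < Cardinal.continuum := by rwa [Cardinal.lift_id']
  obtain ⟨S, hSfin, hSmeet⟩ := comb_lemma hnd (T '' M) himg
    (by
      rintro t ⟨c, hc, rfl⟩ s ⟨d, hd, rfl⟩
      refine ⟨T (c ⊓ d), ⟨c ⊓ d, hMinf c hc d hd, rfl⟩, fun k hk => ?_⟩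
      constructor
      · exact fun hbot => hk (le_bot_iff.1 (hbot ▸ inf_le_inf_right (p k) inf_le_left))
      · exact fun hbot => hk (le_bot_iff.1 (hbot ▸ inf_le_inf_right (p k) inf_le_right)))
    (by
      rintro t ⟨c, hc, rfl⟩
      have hcbot : c ≠ ⊥ := fun h => hMbot (h ▸ hc)
      obtain ⟨q, ⟨k, rfl⟩, hq⟩ := hP.2.2 c hcbot
      exact ⟨k, hq⟩)
    A hdisj hcov
    (fun n => by
      obtain ⟨c, hc, hbot⟩ := havoid n
      refine ⟨T c, ⟨c, hc, rfl⟩, Set.eq_empty_iff_forall_notMem.2 fun k hk => ?_⟩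
      exact hk.1 (le_bot_iff.1 (le_trans
        (inf_le_inf_left c (le_iSup₂ (f := fun k _ => p k) k hk.2)) hbot.le)))
  refine ⟨S, hSfin, fun c hc hbot => ?_⟩
  obtain ⟨k, hkS, hkT⟩ := hSmeet (T c) ⟨c, hc, rfl⟩
  exact hkT (le_bot_iff.1 (le_trans
    (inf_le_inf_left c (le_iSup₂ (f := fun k _ => p k) k hkS)) hbot.le))

/-- conditions under which the recursion step acts nontrivially. -/
def StepConds (p : ℕ → B) (A : ℕ → Set ℕ) (S : Set B) : Prop :=
  Function.Injective p ∧ IsBPartition (Set.range p) ∧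
    (Pairwise fun m n => A m ∩ A n = ∅) ∧ (⋃ n, A n) = Set.univ ∧
    ⊥ ∉ meetsB S ∧ #(meetsB S) < Cardinal.continuum

theorem step_ex
    (hnd : ¬∃ D : Set (ℕ → ℕ), #D < Cardinal.continuum ∧
        ∀ g : ℕ → ℕ, ∃ f ∈ D, ∀ᶠ n in Filter.atTop, g n ≤ f n)
    (p : ℕ → B) (A : ℕ → Set ℕ) (S : Set B) :
    ∃ b : B,
      (StepConds p A S →
        (∀ c ∈ meetsB S, c ⊓ b ≠ ⊥) ∧
        ((∃ n, b = ⨆ k ∈ A n, p k) ∨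
          ∃ S' : Set ℕ, b = (⨆ k ∈ S', p k) ∧ ∀ n, (S' ∩ A n).Finite)) ∧
      (¬StepConds p A S → b = ⊤) := by
  by_cases hc : StepConds p A S
  · obtain ⟨hp, hP, hdisj, hcov, hSbot, hScard⟩ := hc
    by_cases h2 : ∃ n, ∀ c ∈ meetsB S, c ⊓ (⨆ k ∈ A n, p k) ≠ ⊥
    · refine ⟨⨆ k ∈ A h2.choose, p k, fun _ => ⟨h2.choose_spec, Or.inl ⟨h2.choose, rfl⟩⟩,
        fun hnc => absurd ⟨hp, hP, hdisj, hcov, hSbot, hScard⟩ hnc⟩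
    · push_neg at h2
      have havoid : ∀ n, ∃ c ∈ meetsB S, c ⊓ (⨆ k ∈ A n, p k) = ⊥ := by
        intro n
        obtain ⟨c, hc1, hc2⟩ := h2 n
        exact ⟨c, hc1, hc2⟩
      obtain ⟨S', hS'fin, hS'meet⟩ := ex_S hnd hP hdisj hcov hScard
        (fun a ha b hb => inf_mem_meetsB ha hb) hSbot havoid
      exact ⟨⨆ k ∈ S', p k, fun _ => ⟨hS'meet, Or.inr ⟨S', rfl, hS'fin⟩⟩,
        fun hnc => absurd ⟨hp, hP, hdisj, hcov, hSbot, hScard⟩ hnc⟩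
  · exact ⟨⊤, fun h => absurd h hc, fun _ => rfl⟩

end Step

section Main
variable [CompleteBooleanAlgebra B]

theorem task_card_le (hB : #B ≤ Cardinal.continuum) :
    #((ℕ → B) × (ℕ → Set ℕ)) ≤ Cardinal.continuum := by
  have h1 : #(ℕ → B) ≤ Cardinal.continuum := by
    rw [Cardinal.mk_arrow]
    calc Cardinal.lift #B ^ Cardinal.lift #ℕ ≤ Cardinal.continuum ^ Cardinal.lift #ℕ := by
          apply Cardinal.power_le_power_right
          rwa [Cardinal.lift_le_continuum]
      _ = Cardinal.continuum := by
          rw [Cardinal.mk_nat, Cardinal.lift_aleph0, Cardinal.continuum_power_aleph0]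
  have h2 : #(ℕ → Set ℕ) ≤ Cardinal.continuum := by
    rw [Cardinal.mk_arrow]
    calc Cardinal.lift #(Set ℕ) ^ Cardinal.lift #ℕ
        ≤ Cardinal.continuum ^ Cardinal.lift #ℕ := by
          apply Cardinal.power_le_power_right
          rw [Cardinal.lift_le_continuum, Cardinal.mk_set, Cardinal.mk_nat,
            Cardinal.two_power_aleph0]
      _ = Cardinal.continuum := by
          rw [Cardinal.mk_nat, Cardinal.lift_aleph0, Cardinal.continuum_power_aleph0]
  rw [Cardinal.mk_prod]
  calc Cardinal.lift #(ℕ → B) * Cardinal.lift #(ℕ → Set ℕ)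
      ≤ Cardinal.continuum * Cardinal.continuum := by
        apply mul_le_mul' <;> rwa [Cardinal.lift_le_continuum]
    _ = Cardinal.continuum := Cardinal.continuum_mul_self

theorem generic_of_nd (hcardB : #B ≤ Cardinal.continuum)
    (hnd : ¬∃ D : Set (ℕ → ℕ), #D < Cardinal.continuum ∧
        ∀ g : ℕ → ℕ, ∃ f ∈ D, ∀ᶠ n in Filter.atTop, g n ≤ f n)
    {F : Set B} (hF : IsBFilter F)
    (hbase : ∃ C ⊆ F, #C < Cardinal.continuum ∧ ∀ a ∈ F, ∃ c ∈ C, c ≤ a) :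
    ∃ U : Set B, IsCoherentPUltrafilter U ∧ F ⊆ U := by
  classical
  obtain ⟨C₀, hC₀F, hC₀card, hC₀base⟩ := hbase
  have hC₀bot : ⊥ ∉ meetsB C₀ := fun h => hF.1 (meetsB_subset_filter hF hC₀F h)
  have hTne : Nonempty ((ℕ → B) × (ℕ → Set ℕ)) := ⟨fun _ => ⊥, fun _ => ∅⟩
  have hTask : #((ℕ → B) × (ℕ → Set ℕ)) ≤ #(Cardinal.continuum.ord.ToType) := by
    rw [Cardinal.mk_ord_toType]
    exact task_card_le hcardB
  obtain ⟨emb⟩ := Cardinal.le_def _ _ |>.1 hTask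
  have wfi : WellFounded ((· < ·) :
      Cardinal.continuum.ord.ToType → Cardinal.continuum.ord.ToType → Prop) :=
    wellFounded_lt
  set τ : Cardinal.continuum.ord.ToType → (ℕ → B) × (ℕ → Set ℕ) :=
    Function.invFun emb with hτdef
  have hτ : ∀ t, τ (emb t) = t := fun t => Function.leftInverse_invFun emb.injective t
  set b : Cardinal.continuum.ord.ToType → B :=
    WellFounded.fix wfi (fun i rec =>
      (step_ex hnd (τ i).1 (τ i).2
        (C₀ ∪ Set.range fun j : ↥(Set.Iio i) => rec j.1 j.2)).choose) with hbdef
  have hb : ∀ i, b i = (step_ex hnd (τ i).1 (τ i).2 (C₀ ∪ b '' Set.Iio i)).choose := by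
    intro i
    have h1 : b i = (step_ex hnd (τ i).1 (τ i).2
        (C₀ ∪ Set.range fun j : ↥(Set.Iio i) => b j.1)).choose := by
      rw [hbdef]
      exact WellFounded.fix_eq _ _ _
    rw [Set.image_eq_range b (Set.Iio i)]
    exact h1
  -- cardinality bounds
  have hBsecard : ∀ i, #(↥(C₀ ∪ b '' Set.Iio i)) < Cardinal.continuum := by
    intro i
    apply lt_of_le_of_lt (Cardinal.mk_union_le _ _)
    apply Cardinal.add_lt_of_lt Cardinal.aleph0_le_continuum hC₀card
    exact lt_of_le_of_lt Cardinal.mk_image_le (Cardinal.mk_Iio_ord_toType i)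
  have hmeets_card : ∀ i, #(meetsB (C₀ ∪ b '' Set.Iio i)) < Cardinal.continuum :=
    fun i => lt_of_le_of_lt (mk_meetsB_le _)
      (max_lt Cardinal.aleph0_lt_continuum (hBsecard i))
  -- monotonicity of the stages
  have hmono : ∀ {j k : Cardinal.continuum.ord.ToType}, j ≤ k →
      (C₀ ∪ b '' Set.Iio j) ∪ {b j} ⊆ (C₀ ∪ b '' Set.Iio k) ∪ {b k} := by
    intro j k hjk x hx
    rcases eq_or_lt_of_le hjk with rfl | hlt
    · exact hx
    rcases hx with hx | hx
    · rcases hx with hxC | ⟨y, hy, rfl⟩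
      · exact Or.inl (Or.inl hxC)
      · exact Or.inl (Or.inr ⟨y, lt_trans hy hlt, rfl⟩)
    · exact Or.inl (Or.inr ⟨j, hlt, hx.symm⟩)
  -- decomposition of finite meets of the final family
  have claimD : ∀ (J : Set Cardinal.continuum.ord.ToType) (l : List ↥(C₀ ∪ b '' J)),
      ((l.map Subtype.val).foldr (· ⊓ ·) ⊤) ∈ meetsB C₀ ∨
        ∃ j ∈ J, ((l.map Subtype.val).foldr (· ⊓ ·) ⊤) ∈
          meetsB ((C₀ ∪ b '' Set.Iio j) ∪ {b j}) := by
    intro J l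
    induction l with
    | nil => exact Or.inl (top_mem_meetsB C₀)
    | cons a l ih =>
      simp only [List.map_cons, List.foldr_cons]
      have hCsub : ∀ j, (meetsB C₀ : Set B) ⊆ meetsB ((C₀ ∪ b '' Set.Iio j) ∪ {b j}) :=
        fun j => meetsB_mono fun x hx => Or.inl (Or.inl hx)
      rcases a.2 with haC | ⟨j0, hj0, hba⟩
      · rcases ih with h | ⟨j, hj, h⟩
        · exact Or.inl (inf_mem_meetsB (subset_meetsB _ haC) h)
        · exact Or.inr ⟨j, hj, inf_mem_meetsB (subset_meetsB _ (Or.inl (Or.inl haC))) h⟩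
      · rcases ih with h | ⟨k, hk, h⟩
        · exact Or.inr ⟨j0, hj0,
            inf_mem_meetsB (subset_meetsB _ (Or.inr (by rw [← hba]; rfl))) (hCsub j0 h)⟩
        · rcases le_total j0 k with hjk | hkj
          · exact Or.inr ⟨k, hk,
              inf_mem_meetsB (subset_meetsB _ (hmono hjk (Or.inr (by rw [← hba]; rfl)))) h⟩
          · exact Or.inr ⟨j0, hj0,
              inf_mem_meetsB (subset_meetsB _ (Or.inr (by rw [← hba]; rfl)))
                (meetsB_mono (hmono hkj) h)⟩
  have hproper : ∀ (J : Set Cardinal.continuum.ord.ToType),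
      (∀ j ∈ J, ⊥ ∉ meetsB ((C₀ ∪ b '' Set.Iio j) ∪ {b j})) →
      ⊥ ∉ meetsB (C₀ ∪ b '' J) := by
    intro J hJ hbot
    obtain ⟨l, hl⟩ := hbot
    have hl' : ((l.map Subtype.val).foldr (· ⊓ ·) ⊤ : B) = ⊥ := hl
    rcases claimD J l with h | ⟨j, hj, h⟩
    · rw [hl'] at h; exact hC₀bot h
    · rw [hl'] at h; exact hJ j hj h
  -- the main invariant, by transfinite induction
  have key : ∀ i, ⊥ ∉ meetsB ((C₀ ∪ b '' Set.Iio i) ∪ {b i}) := by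
    intro i
    refine wfi.induction (C := fun i => ⊥ ∉ meetsB ((C₀ ∪ b '' Set.Iio i) ∪ {b i})) i ?_
    clear i
    intro i IH
    have hBsebot : ⊥ ∉ meetsB (C₀ ∪ b '' Set.Iio i) := hproper _ IH
    have hspec := Exists.choose_spec (step_ex hnd (τ i).1 (τ i).2 (C₀ ∪ b '' Set.Iio i))
    rw [← hb i] at hspec
    by_cases hc : StepConds (τ i).1 (τ i).2 (C₀ ∪ b '' Set.Iio i)
    · obtain ⟨hcompat, _⟩ := hspec.1 hc
      intro hbot
      obtain ⟨c, hcmem, hcase⟩ := meetsB_union_singleton hbot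
      rcases hcase with h | h
      · exact hBsebot (h ▸ hcmem)
      · exact hcompat c hcmem h.symm
    · have hbtop : b i = ⊤ := hspec.2 hc
      intro hbot
      obtain ⟨c, hcmem, hcase⟩ := meetsB_union_singleton hbot
      rcases hcase with h | h
      · exact hBsebot (h ▸ hcmem)
      · rw [hbtop, inf_top_eq] at h
        exact hBsebot (h ▸ hcmem)
  -- the final filter and ultrafilter
  have hallbot : ⊥ ∉ meetsB (C₀ ∪ Set.range b) := by
    rw [← Set.image_univ]
    exact hproper Set.univ fun j _ => key j
  obtain ⟨U, hU, hFU⟩ := exists_isBUltrafilter_superset (isBFilter_genFilterB hallbot)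
  refine ⟨U, ⟨hU, ?_⟩, ?_⟩
  · -- coherence
    intro p hp hPt
    refine ⟨trace_isNUltrafilter hU hp hPt, ?_⟩
    intro A hdisj hcov hnotin
    set i := emb (p, A) with hi
    have hτi : τ i = (p, A) := hτ (p, A)
    have hBsebot : ⊥ ∉ meetsB (C₀ ∪ b '' Set.Iio i) :=
      hproper _ fun j _ => key j
    have hspec := Exists.choose_spec (step_ex hnd (τ i).1 (τ i).2 (C₀ ∪ b '' Set.Iio i))
    rw [← hb i] at hspec
    rw [hτi] at hspec
    have hconds : StepConds p A (C₀ ∪ b '' Set.Iio i) :=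
      ⟨hp, hPt, hdisj, hcov, hBsebot, hmeets_card i⟩
    have hbU : b i ∈ U :=
      hFU (subset_genFilterB _ (Or.inr (Set.mem_range_self i)))
    obtain ⟨hcompat, hcase⟩ := hspec.1 hconds
    rcases hcase with ⟨n, hn⟩ | ⟨S', hS'eq, hS'fin⟩
    · exact absurd (show (⨆ k ∈ A n, p k) ∈ U from hn ▸ hbU) (hnotin n)
    · exact ⟨S', show (⨆ k ∈ S', p k) ∈ U from hS'eq ▸ hbU, hS'fin⟩
  · -- F ⊆ U
    intro a ha
    obtain ⟨c, hcC, hca⟩ := hC₀base a ha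
    exact hFU ⟨c, subset_meetsB _ (Or.inl hcC), hca⟩

end Main

section Partitions


variable [BooleanAlgebra B]

theorem infinite_cone_split (b : B) (h : {x : B | x ≤ b}.Infinite) :
    ∃ t : B × B, t.1 ≠ ⊥ ∧ t.1 ≤ b ∧ t.2 ≤ b ∧ t.1 ⊓ t.2 = ⊥ ∧
      {x : B | x ≤ t.2}.Infinite := by
  obtain ⟨x, hxmem, hxne⟩ := (h.diff (Set.toFinite ({⊥, b} : Set B))).nonempty
  simp only [Set.mem_insert_iff, Set.mem_singleton_iff, not_or] at hxne
  obtain ⟨hxbot, hxb⟩ := hxne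
  have hxle : x ≤ b := hxmem
  have hsd : b \ x ≠ ⊥ := by
    rw [Ne, sdiff_eq_bot_iff]
    exact fun hle => hxb (le_antisymm hxle hle)
  have hsplit : {y : B | y ≤ x}.Infinite ∨ {z : B | z ≤ b \ x}.Infinite := by
    by_contra hcon
    push_neg at hcon
    obtain ⟨h1, h2⟩ := hcon
    refine h (Set.Finite.subset ((h1.prod h2).image fun yz : B × B => yz.1 ⊔ yz.2) ?_)
    intro y hy
    have hyb : y ≤ b := hy
    refine ⟨(y ⊓ x, y ⊓ (b \ x)), ⟨inf_le_right, inf_le_right⟩, ?_⟩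
    show y ⊓ x ⊔ y ⊓ (b \ x) = y
    rw [sdiff_eq, inf_left_comm y b, inf_eq_right.2 (le_trans inf_le_left hyb),
      ← inf_sup_left, sup_compl_eq_top, inf_top_eq]
  rcases hsplit with hx | hbx
  · refine ⟨(b \ x, x), hsd, sdiff_le, hxle, ?_, hx⟩
    show b \ x ⊓ x = ⊥
    rw [sdiff_eq, inf_assoc, compl_inf_eq_bot, inf_bot_eq]
  · refine ⟨(x, b \ x), hxbot, hxle, sdiff_le, ?_, hbx⟩
    show x ⊓ (b \ x) = ⊥
    rw [sdiff_eq, inf_left_comm, inf_compl_eq_bot, inf_bot_eq]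

theorem exists_disjoint_seq [Infinite B] :
    ∃ a : ℕ → B, (∀ n, a n ≠ ⊥) ∧ (∀ m n, m ≠ n → a m ⊓ a n = ⊥) := by
  classical
  have htop : {x : B | x ≤ (⊤ : B)}.Infinite := by
    have : {x : B | x ≤ (⊤ : B)} = Set.univ := by
      ext x; simp
    rw [this]
    exact Set.infinite_univ
  let g : {s : B // {x : B | x ≤ s}.Infinite} → B × {s : B // {x : B | x ≤ s}.Infinite} :=
    fun s =>
      ⟨(infinite_cone_split s.1 s.2).choose.1,
        ⟨(infinite_cone_split s.1 s.2).choose.2,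
          (infinite_cone_split s.1 s.2).choose_spec.2.2.2.2⟩⟩
  let f : ℕ → {s : B // {x : B | x ≤ s}.Infinite} := fun n =>
    Nat.rec ⟨⊤, htop⟩ (fun _ s => (g s).2) n
  let a : ℕ → B := fun n => (g (f n)).1
  have hspec : ∀ n, a n ≠ ⊥ ∧ a n ≤ (f n).1 ∧ (f (n + 1)).1 ≤ (f n).1 ∧
      a n ⊓ (f (n + 1)).1 = ⊥ := by
    intro n
    obtain ⟨h1, h2, h3, h4, _⟩ := (infinite_cone_split (f n).1 (f n).2).choose_spec
    exact ⟨h1, h2, h3, h4⟩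
  have hchain : ∀ m n, n ≤ m → (f m).1 ≤ (f n).1 := by
    intro m
    induction m with
    | zero => intro n hn; rw [Nat.le_zero.1 hn]
    | succ m ih =>
      intro n hn
      rcases Nat.lt_or_ge n (m + 1) with h | h
      · exact le_trans (hspec m).2.2.1 (ih n (by omega))
      · have : n = m + 1 := by omega
        rw [this]
  refine ⟨a, fun n => (hspec n).1, fun m n hmn => ?_⟩
  wlog hlt : m < n generalizing m n
  · rw [inf_comm]
    exact this n m (Ne.symm hmn) (by omega)
  have : a n ≤ (f (m + 1)).1 := le_trans (hspec n).2.1 (hchain n (m + 1) (by omega))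
  exact le_bot_iff.1 (le_trans (inf_le_inf_left (a m) this) (hspec m).2.2.2.le)

theorem exists_countable_partition [Infinite B] (hcc : BCCC B) :
    ∃ p : ℕ → B, Function.Injective p ∧ IsBPartition (Set.range p) := by
  classical
  obtain ⟨a, habot, hadisj⟩ := exists_disjoint_seq (B := B)
  have hainj : Function.Injective a := by
    intro m n hmn
    by_contra hne
    exact habot m (by rw [← hadisj m n hne, hmn, inf_idem])
  obtain ⟨M, hsub, hmax⟩ := zorn_subset_nonempty
    {S : Set B | Set.range a ⊆ S ∧ ⊥ ∉ S ∧ (S.Pairwise fun x y => x ⊓ y = ⊥)}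
    (fun c hc hchain hcne => by
      refine ⟨⋃₀ c, ⟨?_, ?_, ?_⟩, fun s hs => Set.subset_sUnion_of_mem hs⟩
      · obtain ⟨G, hG⟩ := hcne
        exact (hc hG).1.trans (Set.subset_sUnion_of_mem hG)
      · rintro ⟨G, hG, hbot⟩
        exact (hc hG).2.1 hbot
      · rintro x ⟨G, hG, hx⟩ y ⟨G', hG', hy⟩ hxy
        rcases hchain.total hG hG' with hle | hle
        · exact (hc hG').2.2 (hle hx) hy hxy
        · exact (hc hG).2.2 hx (hle hy) hxy)
    (Set.range a) ⟨Set.Subset.rfl, fun h => by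
      obtain ⟨n, hn⟩ := h
      exact habot n hn, by
      rintro x ⟨m, rfl⟩ y ⟨n, rfl⟩ hxy
      exact hadisj m n fun h => hxy (h ▸ rfl)⟩
  obtain ⟨⟨hrange, hbot, hpair⟩, hmaximal⟩ := hmax
  have hpartition : IsBPartition M := by
    refine ⟨hbot, hpair, fun z hz => ?_⟩
    by_contra hcon
    push_neg at hcon
    have hzM : z ∉ M := fun hzM => hz (by
      have h2 := hcon z hzM
      rwa [inf_idem] at h2)
    have hsymm : Symmetric (fun x y : B => x ⊓ y = ⊥) := fun x y h => by
      show y ⊓ x = ⊥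
      rwa [inf_comm]
    have : insert z M ⊆ M := hmaximal
      ⟨hrange.trans (Set.subset_insert z M),
        fun h => by
          rcases h with h | h
          · exact hz h.symm
          · exact hbot h,
        (haveI : Std.Symm (fun x y : B => x ⊓ y = ⊥) := ⟨fun a b h => hsymm h⟩; Set.pairwise_insert_of_symm).2
          ⟨hpair, fun q hq _ => hcon q hq⟩⟩
      (Set.subset_insert z M)
    exact hzM (this (Set.mem_insert z M))
  have hcnt := hcc M hbot hpair
  have hinf : M.Infinite := (Set.infinite_range_of_injective hainj).mono hrange
  haveI := hcnt.to_subtype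
  haveI := hinf.to_subtype
  obtain ⟨e⟩ := nonempty_equiv_of_countable (α := ℕ) (β := ↥M)
  have hrangeeq : Set.range (fun n => ((e n : ↥M) : B)) = M := by
    ext x
    constructor
    · rintro ⟨n, rfl⟩
      exact (e n).2
    · intro hx
      exact ⟨e.symm ⟨x, hx⟩, by simp⟩
  refine ⟨fun n => ((e n : ↥M) : B), fun m n h => e.injective (Subtype.val_injective h), ?_⟩
  rw [hrangeeq]
  exact hpartition

end Partitions

section Converse
variable [CompleteBooleanAlgebra B]

theorem not_generic_of_dom [Infinite B] (hcc : BCCC B)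
    (hD : ∃ D : Set (ℕ → ℕ), #D < Cardinal.continuum ∧
        ∀ g : ℕ → ℕ, ∃ f ∈ D, ∀ᶠ n in Filter.atTop, g n ≤ f n) :
    ∃ F : Set B, IsBFilter F ∧
      (∃ C ⊆ F, #C < Cardinal.continuum ∧ ∀ a ∈ F, ∃ c ∈ C, c ≤ a) ∧
      ∀ U : Set B, IsCoherentPUltrafilter U → ¬F ⊆ U := by
  classical
  obtain ⟨D, hDcard, hDdom⟩ := hD
  obtain ⟨p, hp, hP⟩ := exists_countable_partition hcc
  set E : ℕ ≃ ℕ × ℕ := (Denumerable.eqv (ℕ × ℕ)).symm with hE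
  set col : ℕ → Set ℕ := fun n => {k | (E k).1 = n} with hcol
  set Cf : (ℕ → ℕ) → Set ℕ := fun f => {k | f (E k).1 ≤ (E k).2} with hCfdef
  set 𝒢 : Set (Set ℕ) := (Cf '' D ∪ Set.range fun m : ℕ => ({m}ᶜ : Set ℕ)) ∪
    (Set.range fun n : ℕ => (col n)ᶜ) with h𝒢
  have hcore : ∀ Y ∈ meetsB 𝒢, ∃ (g : ℕ → ℕ) (N : ℕ) (Ef : Set ℕ), Ef.Finite ∧
      ({k | N ≤ (E k).1 ∧ g (E k).1 ≤ (E k).2} \ Ef) ⊆ Y := by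
    rintro Y ⟨l, rfl⟩
    induction l with
    | nil =>
      exact ⟨fun _ => 0, 0, ∅, Set.finite_empty, fun k _ => trivial⟩
    | cons a l ih =>
      obtain ⟨g, N, Ef, hEf, hsub⟩ := ih
      rcases a.2 with (⟨f, hf, hfeq⟩ | ⟨m, hmeq⟩) | ⟨n, hneq⟩
      · refine ⟨fun i => max (g i) (f i), N, Ef, hEf, fun k hk => ?_⟩
        obtain ⟨⟨h1, h2⟩, h3⟩ := hk
        show k ∈ a.1 ⊓ (l.map Subtype.val).foldr (· ⊓ ·) ⊤
        constructor
        · rw [← hfeq]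
          exact le_trans (le_max_right _ _) h2
        · exact hsub ⟨⟨h1, le_trans (le_max_left _ _) h2⟩, h3⟩
      · refine ⟨g, N, Ef ∪ {m}, hEf.union (Set.finite_singleton m), fun k hk => ?_⟩
        obtain ⟨h1, h2⟩ := hk
        show k ∈ a.1 ⊓ (l.map Subtype.val).foldr (· ⊓ ·) ⊤
        constructor
        · rw [← hmeq]
          exact fun hkm => h2 (Or.inr hkm)
        · exact hsub ⟨h1, fun h => h2 (Or.inl h)⟩
      · refine ⟨g, max N (n + 1), Ef, hEf, fun k hk => ?_⟩
        obtain ⟨⟨h1, h2⟩, h3⟩ := hk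
        show k ∈ a.1 ⊓ (l.map Subtype.val).foldr (· ⊓ ·) ⊤
        constructor
        · rw [← hneq]
          show ¬(E k).1 = n
          have : n + 1 ≤ (E k).1 := le_trans (le_max_right _ _) h1
          omega
        · exact hsub ⟨⟨le_trans (le_max_left _ _) h1, h2⟩, h3⟩
  have hinf𝒢 : ∀ Y ∈ meetsB 𝒢, Y.Infinite := by
    intro Y hY
    obtain ⟨g, N, Ef, hEf, hsub⟩ := hcore Y hY
    have hcoreinf : {k | N ≤ (E k).1 ∧ g (E k).1 ≤ (E k).2}.Infinite := by
      apply Set.infinite_of_injective_forall_mem (f := fun j : ℕ => E.symm (N, g N + j))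
      · intro i j hij
        have h2 := E.symm.injective hij
        rw [Prod.mk.injEq] at h2
        omega
      · intro j
        show N ≤ (E (E.symm (N, g N + j))).1 ∧ g (E (E.symm (N, g N + j))).1 ≤
          (E (E.symm (N, g N + j))).2
        rw [Equiv.apply_symm_apply]
        exact ⟨le_rfl, Nat.le_add_right _ _⟩
    exact (hcoreinf.diff hEf).mono hsub
  set ψ : Set ℕ → B := fun Y => ⨆ k ∈ Y, p k with hψ
  have hψbot : ∀ Y ∈ meetsB 𝒢, ψ Y ≠ ⊥ := by
    intro Y hY hbot
    obtain ⟨k, hk⟩ := (hinf𝒢 Y hY).nonempty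
    exact part_ne_bot hP k (le_bot_iff.1 (hbot ▸ le_iSup₂ (f := fun k _ => p k) k hk))
  set F : Set B := {x | ∃ Y ∈ meetsB 𝒢, ψ Y ≤ x} with hFdef
  have hF : IsBFilter F := by
    refine ⟨?_, ⟨⊤, top_mem_meetsB 𝒢, le_top⟩, ?_, ?_⟩
    · rintro ⟨Y, hY, hle⟩
      exact hψbot Y hY (le_bot_iff.1 hle)
    · rintro a ⟨Y, hY, hle⟩ x hax
      exact ⟨Y, hY, hle.trans hax⟩
    · rintro a ⟨Y, hY, hle⟩ a' ⟨Y', hY', hle'⟩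
      refine ⟨Y ⊓ Y', inf_mem_meetsB hY hY', ?_⟩
      have heq : ψ (Y ⊓ Y') = ψ Y ⊓ ψ Y' := (bsup_inter hp hP Y Y').symm
      rw [heq]
      exact inf_le_inf hle hle'
  have h𝒢card : #(meetsB 𝒢) < Cardinal.continuum := by
    apply lt_of_le_of_lt (mk_meetsB_le _)
    apply max_lt Cardinal.aleph0_lt_continuum
    apply lt_of_le_of_lt (Cardinal.mk_union_le _ _)
    apply Cardinal.add_lt_of_lt Cardinal.aleph0_le_continuum
    · apply lt_of_le_of_lt (Cardinal.mk_union_le _ _)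
      apply Cardinal.add_lt_of_lt Cardinal.aleph0_le_continuum
      · exact lt_of_le_of_lt Cardinal.mk_image_le hDcard
      · exact lt_of_le_of_lt Cardinal.mk_range_le
          (by rw [Cardinal.mk_nat]; exact Cardinal.aleph0_lt_continuum)
    · exact lt_of_le_of_lt Cardinal.mk_range_le
        (by rw [Cardinal.mk_nat]; exact Cardinal.aleph0_lt_continuum)
  have hCcard : #(ψ '' meetsB 𝒢) < Cardinal.continuum := by
    rw [← Cardinal.lift_lt_continuum]
    calc Cardinal.lift #(ψ '' meetsB 𝒢) ≤ Cardinal.lift #(meetsB 𝒢) :=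
          Cardinal.mk_image_le_lift
      _ < Cardinal.continuum := by rwa [Cardinal.lift_lt_continuum]
  refine ⟨F, hF, ⟨ψ '' meetsB 𝒢, ?_, hCcard, ?_⟩, ?_⟩
  · rintro x ⟨Y, hY, rfl⟩
    exact ⟨Y, hY, le_rfl⟩
  · rintro a ⟨Y, hY, hle⟩
    exact ⟨ψ Y, ⟨Y, hY, rfl⟩, hle⟩
  -- non-extendability
  intro U hU hFU
  have hV := hU.2 p hp hP
  have hYV : ∀ Y ∈ meetsB 𝒢, Y ∈ {A : Set ℕ | (⨆ n ∈ A, p n) ∈ U} :=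
    fun Y hY => hFU ⟨Y, hY, le_rfl⟩
  set V : Set (Set ℕ) := {A : Set ℕ | (⨆ n ∈ A, p n) ∈ U} with hVdef
  have hVfilter : IsNFilter V := hV.1.1
  have hsingV : ∀ m : ℕ, ({m}ᶜ : Set ℕ) ∈ V :=
    fun m => hYV _ (subset_meetsB _ (Or.inl (Or.inr ⟨m, rfl⟩)))
  have hVinf : ∀ W ∈ V, W.Infinite := by
    intro W hW
    by_contra hfin
    rw [Set.not_infinite] at hfin
    have hcomplV : ∀ (W' : Set ℕ), W'.Finite → W'ᶜ ∈ V := by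
      intro W' hfin'
      refine Set.Finite.induction_on (motive := fun s _ => sᶜ ∈ V) W' hfin' ?_ ?_
      · rw [Set.compl_empty]
        exact hVfilter.2.1
      · intro a s _ _ ih
        rw [Set.insert_eq, Set.compl_union]
        exact hVfilter.2.2.2 _ (hsingV a) _ ih
    have h2 : W ∩ Wᶜ ∈ V := hVfilter.2.2.2 _ hW _ (hcomplV W hfin)
    rw [Set.inter_compl_self] at h2
    exact hVfilter.1 h2
  have hcolV : ∀ n, col n ∉ V := by
    intro n hcoln
    have h1 : (col n)ᶜ ∈ V := hYV _ (subset_meetsB _ (Or.inr ⟨n, rfl⟩))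
    have h2 := hVfilter.2.2.2 _ hcoln _ h1
    rw [Set.inter_compl_self] at h2
    exact hVfilter.1 h2
  obtain ⟨S, hSV, hSfin⟩ := hV.2 col
    (fun {m n} hmn => Set.eq_empty_iff_forall_notMem.2 fun k hk =>
      hmn (hk.1.symm.trans hk.2))
    (Set.iUnion_eq_univ_iff.2 fun k => ⟨(E k).1, rfl⟩)
    hcolV
  set g : ℕ → ℕ := fun n => (hSfin n).toFinset.sup (fun k => (E k).2) + 1 with hg
  have hgbound : ∀ n, ∀ k ∈ S ∩ col n, (E k).2 < g n := by
    intro n k hk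
    have h2 : (E k).2 ≤ (hSfin n).toFinset.sup (fun k => (E k).2) :=
      Finset.le_sup (f := fun k => (E k).2) ((hSfin n).mem_toFinset.2 hk)
    have h3 : g n = (hSfin n).toFinset.sup (fun k => (E k).2) + 1 := rfl
    omega
  obtain ⟨f, hfD, hfev⟩ := hDdom g
  obtain ⟨N, hN⟩ := Filter.eventually_atTop.1 hfev
  have hCfV : Cf f ∈ V := hYV _ (subset_meetsB _ (Or.inl (Or.inl ⟨f, hfD, rfl⟩)))
  have hSCf : (S ∩ Cf f) ∈ V := hVfilter.2.2.2 _ hSV _ hCfV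
  have hSCffin : (S ∩ Cf f).Finite := by
    apply Set.Finite.subset (Set.Finite.biUnion (Set.finite_Iio N)
      (t := fun n => S ∩ col n) (fun n _ => hSfin n))
    intro k hk
    have hn : (E k).1 < N := by
      by_contra hge
      push_neg at hge
      have hb := hgbound (E k).1 k ⟨hk.1, rfl⟩
      have hNle := hN (E k).1 hge
      have hkC : f (E k).1 ≤ (E k).2 := hk.2
      omega
    exact Set.mem_biUnion hn ⟨hk.1, rfl⟩
  exact Set.not_infinite.2 hSCffin (hVinf _ hSCf)

end Converse

/-- Generic existence of coherent P-ultrafilters on a complete ccc algebra of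
size at most 𝔠 is equivalent to the nonexistence of a dominating family of
size less than 𝔠 (i.e. to 𝔠 = 𝔡). -/
theorem coherentP_generic_existence_iff_dominating
    [CompleteBooleanAlgebra B] [Infinite B] (hcc : BCCC B)
    (hcard : #B ≤ Cardinal.continuum) :
    (∀ F : Set B, IsBFilter F →
        (∃ C ⊆ F, #C < Cardinal.continuum ∧ ∀ a ∈ F, ∃ c ∈ C, c ≤ a) →
        ∃ U : Set B, IsCoherentPUltrafilter U ∧ F ⊆ U) ↔
    ¬∃ D : Set (ℕ → ℕ), #D < Cardinal.continuum ∧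
        ∀ g : ℕ → ℕ, ∃ f ∈ D, ∀ᶠ n in Filter.atTop, g n ≤ f n := by
  constructor
  · intro hgen hD
    obtain ⟨F, hF, hbase, hbad⟩ := not_generic_of_dom hcc hD
    obtain ⟨U, hU, hFU⟩ := hgen F hF hbase
    exact hbad U hU hFU
  · intro hnd F hF hbase
    exact generic_of_nd hcard hnd hF hbase
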